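/- For every integer k ≥ 2, Σ_{j=0}^{k} (-1)^j · C(2k+2, j) · ((k+1-j)⁴ + (k+1-j)²) = 0. -/

import Mathlib

open Finset

/-- `2 * C(j,2) = j(j-1)` over ℤ. -/
lemma ch2 (j : ℕ) : ((j.choose 2 : ℕ) : ℤ) * 2 = (j : ℤ) * ((j : ℤ) - 1) := by
  induction j with
  | zero => simp
  | succ j ih =>
    rw [Nat.choose_succ_succ, Nat.choose_one_right]
    push_cast
    push_cast at ih
    linarith [ih]

lemma ch3 (j : ℕ) : ((j.choose 3 : ℕ) : ℤ) * 6 = (j : ℤ) * ((j : ℤ) - 1) * ((j : ℤ) - 2) := by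
  induction j with
  | zero => simp
  | succ j ih =>
    rw [Nat.choose_succ_succ]
    have h2 := ch2 j
    push_cast
    push_cast at ih h2
    nlinarith [ih, h2]

lemma ch4 (j : ℕ) : ((j.choose 4 : ℕ) : ℤ) * 24 =
    (j : ℤ) * ((j : ℤ) - 1) * ((j : ℤ) - 2) * ((j : ℤ) - 3) := by
  induction j with
  | zero => simp
  | succ j ih =>
    rw [Nat.choose_succ_succ]
    have h3 := ch3 j
    push_cast
    push_cast at ih h3
    nlinarith [ih, h3]

/-- The key alternating-sum identity: for `m < n`,
`∑_{j=0}^{n} (-1)^j C(n,j) C(j,m) = 0`. -/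
lemma alt_choose (n m : ℕ) (h : m < n) :
    ∑ j ∈ range (n + 1), (-1 : ℤ) ^ j * (n.choose j : ℤ) * (j.choose m : ℤ) = 0 := by
  have hn1 : n + 1 = m + (n - m + 1) := by omega
  rw [hn1, Finset.sum_range_add]
  have h1 : ∑ j ∈ range m, (-1 : ℤ) ^ j * (n.choose j : ℤ) * (j.choose m : ℤ) = 0 := by
    apply Finset.sum_eq_zero
    intro j hj
    rw [Nat.choose_eq_zero_of_lt (mem_range.mp hj)]
    simp
  rw [h1, zero_add]
  have h2 : ∀ i ∈ range (n - m + 1),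
      (-1 : ℤ) ^ (m + i) * (n.choose (m + i) : ℤ) * ((m + i).choose m : ℤ) =
      ((-1 : ℤ) ^ m * (n.choose m : ℤ)) * ((-1 : ℤ) ^ i * ((n - m).choose i : ℤ)) := by
    intro i hi
    have hle : m + i ≤ n := by
      have := mem_range.mp hi; omega
    have hcm : n.choose (m + i) * (m + i).choose m = n.choose m * (n - m).choose (m + i - m) :=
      Nat.choose_mul (Nat.le_add_right m i)
    rw [Nat.add_sub_cancel_left] at hcm
    have hcast : (n.choose (m + i) : ℤ) * ((m + i).choose m : ℤ)
        = (n.choose m : ℤ) * ((n - m).choose i : ℤ) := by exact_mod_cast hcm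
    rw [pow_add]
    linear_combination ((-1 : ℤ) ^ m * (-1 : ℤ) ^ i) * hcast
  rw [Finset.sum_congr rfl h2, ← Finset.mul_sum,
    Int.alternating_sum_range_choose_of_ne (by omega : n - m ≠ 0), mul_zero]

/-- Full alternating sum over all `j ≤ 2k+2` vanishes. -/
lemma full_sum (k : ℕ) (hk : 2 ≤ k) :
    ∑ j ∈ range (2 * k + 3), (-1 : ℤ) ^ j * ((2 * k + 2).choose j : ℤ) *
        (((k : ℤ) + 1 - j) ^ 4 + ((k : ℤ) + 1 - j) ^ 2) = 0 := by
  set n := 2 * k + 2 with hn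
  have h23 : 2 * k + 3 = n + 1 := by omega
  have S0 : ∑ j ∈ range (n + 1), (-1 : ℤ) ^ j * (n.choose j : ℤ) = 0 :=
    Int.alternating_sum_range_choose_of_ne (by omega)
  have S1 := alt_choose n 1 (by omega)
  have S2 := alt_choose n 2 (by omega)
  have S3 := alt_choose n 3 (by omega)
  have S4 := alt_choose n 4 (by omega)
  rw [h23]
  set K : ℤ := (k : ℤ) + 1 with hK
  have T1 : ∑ j ∈ range (n + 1), (-1 : ℤ) ^ j * (n.choose j : ℤ) * (j : ℤ) = 0 := by
    rw [← S1]
    exact Finset.sum_congr rfl fun j _ => by rw [Nat.choose_one_right]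
  have T2 : ∑ j ∈ range (n + 1),
      (-1 : ℤ) ^ j * (n.choose j : ℤ) * ((j : ℤ) * ((j : ℤ) - 1)) = 0 := by
    have e : ∀ j ∈ range (n + 1), (-1 : ℤ) ^ j * (n.choose j : ℤ) * ((j : ℤ) * ((j : ℤ) - 1))
        = 2 * ((-1 : ℤ) ^ j * (n.choose j : ℤ) * (j.choose 2 : ℤ)) := fun j _ => by
      linear_combination (-((-1 : ℤ) ^ j * (n.choose j : ℤ))) * ch2 j
    rw [Finset.sum_congr rfl e, ← Finset.mul_sum, S2, mul_zero]
  have T3 : ∑ j ∈ range (n + 1),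
      (-1 : ℤ) ^ j * (n.choose j : ℤ) * ((j : ℤ) * ((j : ℤ) - 1) * ((j : ℤ) - 2)) = 0 := by
    have e : ∀ j ∈ range (n + 1), (-1 : ℤ) ^ j * (n.choose j : ℤ) *
          ((j : ℤ) * ((j : ℤ) - 1) * ((j : ℤ) - 2))
        = 6 * ((-1 : ℤ) ^ j * (n.choose j : ℤ) * (j.choose 3 : ℤ)) := fun j _ => by
      linear_combination (-((-1 : ℤ) ^ j * (n.choose j : ℤ))) * ch3 j
    rw [Finset.sum_congr rfl e, ← Finset.mul_sum, S3, mul_zero]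
  have T4 : ∑ j ∈ range (n + 1),
      (-1 : ℤ) ^ j * (n.choose j : ℤ) *
        ((j : ℤ) * ((j : ℤ) - 1) * ((j : ℤ) - 2) * ((j : ℤ) - 3)) = 0 := by
    have e : ∀ j ∈ range (n + 1), (-1 : ℤ) ^ j * (n.choose j : ℤ) *
          ((j : ℤ) * ((j : ℤ) - 1) * ((j : ℤ) - 2) * ((j : ℤ) - 3))
        = 24 * ((-1 : ℤ) ^ j * (n.choose j : ℤ) * (j.choose 4 : ℤ)) := fun j _ => by
      linear_combination (-((-1 : ℤ) ^ j * (n.choose j : ℤ))) * ch4 j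
    rw [Finset.sum_congr rfl e, ← Finset.mul_sum, S4, mul_zero]
  have key : ∀ j ∈ range (n + 1),
      (-1 : ℤ) ^ j * (n.choose j : ℤ) * ((K - j) ^ 4 + (K - j) ^ 2) =
        (K ^ 4 + K ^ 2) * ((-1 : ℤ) ^ j * (n.choose j : ℤ))
        + (2 - 6 * K + 6 * K ^ 2 - 4 * K ^ 3) * ((-1 : ℤ) ^ j * (n.choose j : ℤ) * (j : ℤ))
        + (8 - 12 * K + 6 * K ^ 2) *
            ((-1 : ℤ) ^ j * (n.choose j : ℤ) * ((j : ℤ) * ((j : ℤ) - 1)))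
        + (6 - 4 * K) * ((-1 : ℤ) ^ j * (n.choose j : ℤ) *
            ((j : ℤ) * ((j : ℤ) - 1) * ((j : ℤ) - 2)))
        + 1 * ((-1 : ℤ) ^ j * (n.choose j : ℤ) *
            ((j : ℤ) * ((j : ℤ) - 1) * ((j : ℤ) - 2) * ((j : ℤ) - 3))) := by
    intro j _
    ring
  rw [Finset.sum_congr rfl key]
  simp only [Finset.sum_add_distrib, ← Finset.mul_sum]
  rw [S0, T1, T2, T3, T4]
  ring

theorem stmt4 (k : ℕ) (hk : 2 ≤ k) :
    ∑ j ∈ Finset.range (k + 1),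
      (-1 : ℤ) ^ j * ((2 * k + 2).choose j : ℤ) *
        (((k : ℤ) + 1 - j) ^ 4 + ((k : ℤ) + 1 - j) ^ 2) = 0 := by
  set F : ℕ → ℤ := fun j => (-1 : ℤ) ^ j * ((2 * k + 2).choose j : ℤ) *
      (((k : ℤ) + 1 - j) ^ 4 + ((k : ℤ) + 1 - j) ^ 2) with hF
  have hfull : ∑ j ∈ range (2 * k + 3), F j = 0 := full_sum k hk
  have hsplit : (2 * k + 3) = (k + 2) + (k + 1) := by omega
  rw [hsplit, Finset.sum_range_add] at hfull
  have hmid : F (k + 1) = 0 := by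
    simp only [hF]
    push_cast
    ring_nf
  have hsym : ∀ j ≤ k, F (2 * k + 2 - j) = F j := by
    intro j hj
    have hle : j ≤ 2 * k + 2 := by omega
    have hsgn : (-1 : ℤ) ^ (2 * k + 2 - j) = (-1 : ℤ) ^ j := by
      have h1 : (-1 : ℤ) ^ (2 * k + 2 - j) * (-1 : ℤ) ^ j = 1 := by
        rw [← pow_add, Nat.sub_add_cancel hle]
        simp [pow_mul, pow_add]
      have h2 : (-1 : ℤ) ^ j * (-1 : ℤ) ^ j = 1 := by
        rw [← pow_add, ← two_mul, pow_mul]; simp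
      calc (-1 : ℤ) ^ (2 * k + 2 - j)
          = (-1 : ℤ) ^ (2 * k + 2 - j) * ((-1 : ℤ) ^ j * (-1 : ℤ) ^ j) := by rw [h2, mul_one]
        _ = ((-1 : ℤ) ^ (2 * k + 2 - j) * (-1 : ℤ) ^ j) * (-1 : ℤ) ^ j := by ring
        _ = (-1 : ℤ) ^ j := by rw [h1, one_mul]
    have hch : (2 * k + 2).choose (2 * k + 2 - j) = (2 * k + 2).choose j :=
      Nat.choose_symm hle
    have hcast : ((2 * k + 2 - j : ℕ) : ℤ) = 2 * (k : ℤ) + 2 - (j : ℤ) := by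
      push_cast [Nat.cast_sub hle]; ring
    simp only [hF, hsgn, hch, hcast]
    ring
  have hrefl : ∑ i ∈ range (k + 1), F (k + 2 + i) = ∑ j ∈ range (k + 1), F j := by
    rw [← Finset.sum_range_reflect (fun i => F (k + 2 + i)) (k + 1)]
    apply Finset.sum_congr rfl
    intro j hj
    have hj' : j ≤ k := by have := mem_range.mp hj; omega
    have : k + 2 + (k + 1 - 1 - j) = 2 * k + 2 - j := by omega
    rw [this, hsym j hj']
  rw [Finset.sum_range_succ, hmid, add_zero, hrefl] at hfull
  linarith [hfull]
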